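/- Let E be a quantum channel with Kraus operators {E_a}, P an orthogonal projection on H, and 𝒜 a *-subalgebra of L(PH) (operators supported on PH). Then P E†(X) P = P X P for all X ∈ 𝒜 (i.e., 𝒜 is conserved by E for states in PH) if and only if [E_a P, X] = 0 for all X ∈ 𝒜 and all a. -/

import Mathlib

open Matrix BigOperators

lemma aux_sum_zero {k n : ℕ} (D : Fin k → Matrix (Fin n) (Fin n) ℂ)
    (h : ∑ a, (D a)ᴴ * D a = 0) (a : Fin k) : D a = 0 := by
  have hg : ∀ b, Matrix.trace ((D b)ᴴ * D b) =
      ((∑ i, ∑ j, Complex.normSq (D b i j) : ℝ) : ℂ) := by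
    intro b
    simp only [Matrix.trace, Matrix.diag, Matrix.mul_apply, Matrix.conjTranspose_apply]
    push_cast
    rw [Finset.sum_comm]
    congr 1; ext i; congr 1; ext j
    rw [Complex.normSq_eq_conj_mul_self]
    rfl
  have hsum : ∑ b, Matrix.trace ((D b)ᴴ * D b) = 0 := by
    rw [← Matrix.trace_sum]; simp [h]
  rw [Finset.sum_congr rfl (fun b _ => hg b)] at hsum
  have hsumR : ∑ b, (∑ i, ∑ j, Complex.normSq (D b i j) : ℝ) = 0 := by
    exact_mod_cast hsum
  have hnn : ∀ b ∈ Finset.univ, (0:ℝ) ≤ ∑ i, ∑ j, Complex.normSq (D b i j) :=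
    fun b _ => Finset.sum_nonneg fun i _ => Finset.sum_nonneg fun j _ => Complex.normSq_nonneg _
  have h0 := (Finset.sum_eq_zero_iff_of_nonneg hnn).mp hsumR a (Finset.mem_univ a)
  ext i j
  have := (Finset.sum_eq_zero_iff_of_nonneg
    (fun i _ => Finset.sum_nonneg fun j _ => Complex.normSq_nonneg _)).mp h0 i (Finset.mem_univ i)
  have := (Finset.sum_eq_zero_iff_of_nonneg
    (fun j _ => Complex.normSq_nonneg _)).mp this j (Finset.mem_univ j)
  simpa using Complex.normSq_eq_zero.mp this

theorem conserved_iff_commute {n m : ℕ}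
    (E : Fin m → Matrix (Fin n) (Fin n) ℂ)
    (hTP : ∑ a, (E a)ᴴ * E a = 1)
    (P : Matrix (Fin n) (Fin n) ℂ) (hP1 : Pᴴ = P) (hP2 : P * P = P)
    (𝒜 : NonUnitalStarSubalgebra ℂ (Matrix (Fin n) (Fin n) ℂ))
    (hsupp : ∀ X ∈ 𝒜, P * X * P = X) :
    (∀ X ∈ 𝒜, P * (∑ a, (E a)ᴴ * X * E a) * P = P * X * P) ↔
      (∀ a, ∀ X ∈ 𝒜, Commute (E a * P) X) := by
  have hPX : ∀ X ∈ 𝒜, P * X = X := by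
    intro X hX
    calc P * X = P * (P * X * P) := by rw [hsupp X hX]
    _ = (P * P) * X * P := by noncomm_ring
    _ = P * X * P := by rw [hP2]
    _ = X := hsupp X hX
  have hXP : ∀ X ∈ 𝒜, X * P = X := by
    intro X hX
    calc X * P = (P * X * P) * P := by rw [hsupp X hX]
    _ = P * X * (P * P) := by noncomm_ring
    _ = P * X * P := by rw [hP2]
    _ = X := hsupp X hX
  constructor
  · intro h a X hX
    have hXs : Xᴴ ∈ 𝒜 := 𝒜.star_mem' hX
    have hXsX : Xᴴ * X ∈ 𝒜 := mul_mem hXs hX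
    have h1 : Xᴴ * P = Xᴴ := by
      calc Xᴴ * P = (P * X)ᴴ := by rw [conjTranspose_mul, hP1]
      _ = Xᴴ := by rw [hPX X hX]
    set D : Fin m → Matrix (Fin n) (Fin n) ℂ := fun b => E b * X - X * (E b * P) with hD
    have key : ∀ b, (D b)ᴴ * D b =
        Xᴴ * ((E b)ᴴ * E b) * X - Xᴴ * ((E b)ᴴ * X * E b) * P
          - P * ((E b)ᴴ * Xᴴ * E b) * X + P * ((E b)ᴴ * (Xᴴ * X) * E b) * P := by
      intro b
      simp only [hD, conjTranspose_sub, conjTranspose_mul, hP1]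
      noncomm_ring
    have hzero : ∑ b, (D b)ᴴ * D b = 0 := by
      rw [Finset.sum_congr rfl (fun b _ => key b)]
      rw [Finset.sum_add_distrib, Finset.sum_sub_distrib, Finset.sum_sub_distrib]
      have e1 : ∑ b, Xᴴ * ((E b)ᴴ * E b) * X = Xᴴ * X := by
        rw [← Finset.sum_mul, ← Finset.mul_sum, hTP, Matrix.mul_one]
      have e2 : ∑ b, Xᴴ * ((E b)ᴴ * X * E b) * P = Xᴴ * X := by
        rw [← Finset.sum_mul, ← Finset.mul_sum]
        have h2 := congrArg (fun Y => Xᴴ * Y) (h X hX)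
        rw [hsupp X hX] at h2
        rw [← h2, ← Matrix.mul_assoc, ← Matrix.mul_assoc, h1]
      have e3 : ∑ b, P * ((E b)ᴴ * Xᴴ * E b) * X = Xᴴ * X := by
        rw [← Finset.sum_mul, ← Finset.mul_sum]
        have h3 := congrArg (fun Y => Y * X) (h Xᴴ hXs)
        rw [hsupp Xᴴ hXs] at h3
        rw [← h3, Matrix.mul_assoc (P * _) P X, hPX X hX]
      have e4 : ∑ b, P * ((E b)ᴴ * (Xᴴ * X) * E b) * P = Xᴴ * X := by
        rw [← Finset.sum_mul, ← Finset.mul_sum]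
        rw [h (Xᴴ * X) hXsX, hsupp (Xᴴ * X) hXsX]
      rw [e1, e2, e3, e4]
      noncomm_ring
    have hDa : E a * X - X * (E a * P) = 0 := aux_sum_zero D hzero a
    have hEX : E a * X = X * (E a * P) := sub_eq_zero.mp hDa
    show E a * P * X = X * (E a * P)
    rw [Matrix.mul_assoc, hPX X hX, hEX]
  · intro h X hX
    have step : ∀ a, P * ((E a)ᴴ * X * E a) * P = P * ((E a)ᴴ * E a) * P * X := by
      intro a
      have hc : E a * P * X = X * (E a * P) := h a X hX
      calc P * ((E a)ᴴ * X * E a) * P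
          = P * (E a)ᴴ * (X * (E a * P)) := by noncomm_ring
        _ = P * (E a)ᴴ * (E a * P * X) := by rw [← hc]
        _ = P * ((E a)ᴴ * E a) * P * X := by noncomm_ring
    calc P * (∑ a, (E a)ᴴ * X * E a) * P
        = ∑ a, P * ((E a)ᴴ * X * E a) * P := by rw [Finset.mul_sum, Finset.sum_mul]
      _ = ∑ a, P * ((E a)ᴴ * E a) * P * X := Finset.sum_congr rfl fun a _ => step a
      _ = P * (∑ a, (E a)ᴴ * E a) * P * X := by rw [Finset.mul_sum, Finset.sum_mul, Finset.sum_mul]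
      _ = P * X * P := by rw [hTP, Matrix.mul_one, hP2, hsupp X hX, hPX X hX]
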